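/- Let g : Ω → Ω be the map defined via M-decompositions and the segment bijection g₀. Then for all x, y ∈ Ω, |g(x) ∧ g(y)| ≥ |x ∧ y| − 2; equivalently, the first k letters of g(x) are determined by the first k+2 letters of x. -/

import Mathlib

/-- The word `τ γ^k`. -/
def tgWord {N : ℕ} (τ γ : Fin N) (k : ℕ) : List (Fin N) :=
  τ :: List.replicate k γ

/-- The word `κ α^k κ γ`. -/
def kakWord {N : ℕ} (κ α γ : Fin N) (k : ℕ) : List (Fin N) :=
  κ :: (List.replicate k α ++ [κ, γ])

/-- `C_M = {τγ^k : k ≥ 2} ∪ {κα^kκγ : k ≥ 0}`. -/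
def CM {N : ℕ} (τ κ α γ : Fin N) : Set (List (Fin N)) :=
  {w | ∃ k, 2 ≤ k ∧ w = tgWord τ γ k} ∪ {w | ∃ k, w = kakWord κ α γ k}

/-- `C_{M'} = {κα^kκγ : k ≥ 0} ∪ {κα^kκγγ : k ≥ 0} ∪ {τγγ}`. -/
def CM' {N : ℕ} (τ κ α γ : Fin N) : Set (List (Fin N)) :=
  {w | ∃ k, w = kakWord κ α γ k} ∪ {w | ∃ k, w = kakWord κ α γ k ++ [γ]} ∪
    {tgWord τ γ 2}

/-- The finite word `w` is a prefix of the infinite sequence `y`. -/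
def PrefOf {N : ℕ} (w : List (Fin N)) (y : ℕ → Fin N) : Prop :=
  ∀ i, ∀ h : i < w.length, w.get ⟨i, h⟩ = y i

/-- The sequence `x` belongs to `Ω = {ω κ^∞ : ω ∈ Σ^*}`: it is eventually
equal to `κ`. -/
def InOmega {N : ℕ} (κ : Fin N) (x : ℕ → Fin N) : Prop :=
  ∃ n, ∀ i, n ≤ i → x i = κ

/-- `X` is the greedy decomposition of the infinite sequence `x` into
segments from `C ∪ Σ`: `x = X₀X₁X₂⋯` where each `X j` is the longest prefix
of the remaining tail belonging to `C ∪ Σ` (single letters count as words of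
length 1). -/
def IsDecompOf {N : ℕ} (C : Set (List (Fin N))) (x : ℕ → Fin N)
    (X : ℕ → List (Fin N)) : Prop :=
  ∀ j,
    PrefOf (X j) (fun i => x ((∑ t ∈ Finset.range j, (X t).length) + i)) ∧
    (X j ∈ C ∨ (X j).length = 1) ∧
    ∀ W : List (Fin N), (W ∈ C ∨ W.length = 1) →
      PrefOf W (fun i => x ((∑ t ∈ Finset.range j, (X t).length) + i)) →
      W.length ≤ (X j).length
open Classical in
/-- The segment map `g₀ : C_M ∪ Σ → C_{M'} ∪ Σ`:
`τγ^k ↦ κα^{k-2}κγ` (`k ≥ 2`), `κα^kκγ ↦ κα^{k-1}κγγ` (`k ≥ 1`),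
`κκγ ↦ τγγ`, and `i ↦ i` for single letters. -/
noncomputable def g0 {N : ℕ} (τ κ α γ : Fin N) (w : List (Fin N)) :
    List (Fin N) :=
  if ∃ k, 2 ≤ k ∧ w = tgWord τ γ k then kakWord κ α γ (w.length - 3)
  else if ∃ k, 1 ≤ k ∧ w = kakWord κ α γ k then
    kakWord κ α γ (w.length - 4) ++ [γ]
  else if w = kakWord κ α γ 0 then tgWord τ γ 2
  else w

/-- `u` is the concatenation of the (nonempty) words `X 0, X 1, X 2, ⋯`. -/
def ConcatEq {N : ℕ} (X : ℕ → List (Fin N)) (u : ℕ → Fin N) : Prop :=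
  ∀ j, PrefOf (X j) (fun i => u ((∑ t ∈ Finset.range j, (X t).length) + i))

section basiclen
variable {N : ℕ} {τ κ α γ : Fin N}

theorem tg_len (k : ℕ) : (tgWord τ γ k).length = k + 1 := by
  simp [tgWord]

theorem kak_len (k : ℕ) : (kakWord κ α γ k).length = k + 3 := by
  simp [kakWord]

theorem CM_len_pos {w : List (Fin N)} (h : w ∈ CM τ κ α γ) : 1 ≤ w.length := by
  rcases h with ⟨k, _, rfl⟩ | ⟨k, rfl⟩
  · rw [tg_len]; omega
  · rw [kak_len]; omega

end basiclen

section g0api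
variable {N : ℕ} {τ κ α γ : Fin N}


theorem tg_get (k i : ℕ) (h : i < k + 1) :
    (tgWord τ γ k)[i]'(by rw [tg_len]; omega) = if i = 0 then τ else γ := by
  rcases i with _ | i
  · simp [tgWord]
  · simp only [tgWord, List.getElem_cons_succ]
    rw [List.getElem_replicate]
    exact (if_neg (Nat.succ_ne_zero i)).symm

theorem kak_get (k i : ℕ) (h : i < k + 3) :
    (kakWord κ α γ k)[i]'(by rw [kak_len]; omega) =
      if i = 0 then κ else if i ≤ k then α else if i = k + 1 then κ else γ := by
  rcases i with _ | i
  · simp [kakWord]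
  · simp only [kakWord, List.getElem_cons_succ]
    by_cases hik : i < k
    · rw [List.getElem_append_left (by simpa using hik), List.getElem_replicate]
      have h2 : i + 1 ≤ k := hik
      simp [h2]
    · rw [List.getElem_append_right (by simpa using hik)]
      rcases Nat.lt_or_ge i (k+1) with h2 | h2
      · have e0 : i - k = 0 := by omega
        have e1 : ¬ (i + 1 ≤ k) := by omega
        have e2 : i + 1 = k + 1 := by omega
        simp [e0, e1, e2]
      · have e0 : i - k = 1 := by omega
        have e1 : ¬ (i + 1 ≤ k) := by omega
        have e2 : i + 1 ≠ k + 1 := by omega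
        simp [e0, e1, e2]
        intro h; exact absurd h (by omega)

theorem g0_len (w : List (Fin N)) : (g0 τ κ α γ w).length = w.length := by
  unfold g0
  split_ifs with c1 c2 c3
  · obtain ⟨k, hk, rfl⟩ := c1
    rw [kak_len, tg_len]
    omega
  · obtain ⟨k, hk, rfl⟩ := c2
    simp [kak_len]
    omega
  · subst c3
    rw [tg_len, kak_len]
  · rfl

theorem g0_tg (k : ℕ) (hk : 2 ≤ k) :
    g0 τ κ α γ (tgWord τ γ k) = kakWord κ α γ (k - 2) := by
  rw [g0, if_pos ⟨k, hk, rfl⟩, tg_len]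
  congr 1

theorem kak_ne_tg (h1 : τ ≠ κ) (k k' : ℕ) : kakWord κ α γ k ≠ tgWord τ γ k' := by
  intro h
  have := congrArg (fun l => l.head?) h
  simp [kakWord, tgWord] at this
  exact h1 this.symm

theorem kak_inj (k k' : ℕ) (h : kakWord κ α γ k = kakWord κ α γ k') : k = k' := by
  have := congrArg List.length h
  rw [kak_len, kak_len] at this; omega

theorem tg_inj (k k' : ℕ) (h : tgWord τ γ k = tgWord τ γ k') : k = k' := by
  have := congrArg List.length h
  rw [tg_len, tg_len] at this; omega

theorem g0_kak_pos (h1 : τ ≠ κ) (k : ℕ) (hk : 1 ≤ k) :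
    g0 τ κ α γ (kakWord κ α γ k) = kakWord κ α γ (k - 1) ++ [γ] := by
  rw [g0, if_neg, if_pos ⟨k, hk, rfl⟩, kak_len]
  · congr 2
  · rintro ⟨k', _, h⟩
    exact kak_ne_tg h1 k k' h

theorem g0_kak_zero (h1 : τ ≠ κ) :
    g0 τ κ α γ (kakWord κ α γ 0) = tgWord τ γ 2 := by
  rw [g0, if_neg, if_neg, if_pos rfl]
  · rintro ⟨k', hk', h⟩
    exact absurd (kak_inj _ _ h) (by omega)
  · rintro ⟨k', _, h⟩
    exact kak_ne_tg h1 0 k' h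

theorem g0_single (c : Fin N) : g0 τ κ α γ [c] = [c] := by
  rw [g0, if_neg, if_neg, if_neg]
  · intro h
    have := congrArg List.length h
    rw [kak_len] at this; simp at this
  · rintro ⟨k', _, h⟩
    have := congrArg List.length h
    rw [kak_len] at this; simp at this
  · rintro ⟨k', hk', h⟩
    have := congrArg List.length h
    rw [tg_len] at this; simp at this; omega

end g0api

def Sx {N : ℕ} (X : ℕ → List (Fin N)) (j : ℕ) : ℕ :=
  ∑ t ∈ Finset.range j, (X t).length

section sx
variable {N : ℕ} {τ κ α γ : Fin N} {C : Set (List (Fin N))}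
variable {x : ℕ → Fin N} {X : ℕ → List (Fin N)} {u : ℕ → Fin N}

theorem Sx_zero : Sx X 0 = 0 := by simp [Sx]

theorem Sx_succ (j : ℕ) : Sx X (j + 1) = Sx X j + (X j).length :=
  Finset.sum_range_succ _ _

theorem Sx_mono {j j' : ℕ} (h : j ≤ j') : Sx X j ≤ Sx X j' :=
  Finset.sum_le_sum_of_subset (Finset.range_subset_range.2 h)

theorem le_Sx (hlen : ∀ t, 1 ≤ (X t).length) (j : ℕ) : j ≤ Sx X j := by
  induction j with
  | zero => omega
  | succ j ih => rw [Sx_succ]; have := hlen j; omega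

theorem locate (hlen : ∀ t, 1 ≤ (X t).length) (i : ℕ) :
    ∃ j, Sx X j ≤ i ∧ i < Sx X (j + 1) := by
  induction i with
  | zero =>
    refine ⟨0, Nat.le_refl _, ?_⟩
    rw [Sx_succ, Sx_zero]
    · have := hlen 0; omega
  | succ i ih =>
    obtain ⟨j, hj1, hj2⟩ := ih
    by_cases h : i + 1 < Sx X (j + 1)
    · exact ⟨j, by omega, h⟩
    · refine ⟨j + 1, by omega, ?_⟩
      rw [Sx_succ]
      have := hlen (j + 1); omega

theorem decomp_len_pos (hX : IsDecompOf (CM τ κ α γ) x X) (j : ℕ) :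
    1 ≤ (X j).length := by
  rcases (hX j).2.1 with h | h
  · exact CM_len_pos h
  · omega

theorem decomp_val (hX : IsDecompOf C x X) (j i : ℕ) (h : i < (X j).length) :
    x (Sx X j + i) = (X j)[i] := by
  have := (hX j).1 i h
  simpa [Sx, List.get_eq_getElem] using this.symm

theorem concat_val (hu : ConcatEq X u) (j i : ℕ) (h : i < (X j).length) :
    u (Sx X j + i) = (X j)[i] := by
  have := hu j i h
  simpa [Sx, List.get_eq_getElem] using this.symm

end sx

theorem Sx_g0 {N : ℕ} {τ κ α γ : Fin N} {X : ℕ → List (Fin N)} (j : ℕ) :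
    Sx (fun t => g0 τ κ α γ (X t)) j = Sx X j :=
  Finset.sum_congr rfl fun t _ => g0_len _

theorem run {N : ℕ} {τ κ α γ : Fin N} (h3 : κ ≠ α) (h5 : α ≠ γ)
    {x : ℕ → Fin N} {X : ℕ → List (Fin N)} {u : ℕ → Fin N}
    (hX : IsDecompOf (CM τ κ α γ) x X)
    (hu : ConcatEq (fun j => g0 τ κ α γ (X j)) u)
    (J s L' : ℕ) (hs : Sx X J = s) (hXJ : (X J).length = 1)
    (hα : ∀ i, 1 ≤ i → i < L' → x (s + i) = α) :
    ∀ r, 1 ≤ r → r + 1 < L' → u (s + r) = α := by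
  have hlen := decomp_len_pos hX
  have main : ∀ r, (r < L' → Sx X (J + r) = s + r) ∧
      (1 ≤ r → r + 1 < L' → X (J + r) = [α]) := by
    intro r
    induction r with
    | zero => exact ⟨fun _ => by simpa using hs, fun h => absurd h (by omega)⟩
    | succ r ih =>
      have hsx : r + 1 < L' → Sx X (J + (r + 1)) = s + (r + 1) := by
        intro hr
        have e1 : Sx X (J + (r + 1)) = Sx X (J + r) + (X (J + r)).length := by
          show Sx X ((J + r) + 1) = _
          rw [Sx_succ]
        rcases Nat.eq_zero_or_pos r with rfl | hrpos
        · simp only [Nat.add_zero] at e1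
          rw [e1, hXJ, hs]
        · rw [e1, ih.2 hrpos hr, ih.1 (by omega)]
          simp
          omega
      refine ⟨hsx, ?_⟩
      intro _ hr2
      have hsr : Sx X (J + (r + 1)) = s + (r + 1) := hsx (by omega)
      set m := J + (r + 1) with hm
      have hx0 : x (s + (r + 1)) = α := hα _ (by omega) (by omega)
      have hx1 : x (s + (r + 1) + 1) = α := by
        have h := hα (r + 2) (by omega) (by omega)
        have e : s + (r + 1) + 1 = s + (r + 2) := by omega
        rw [e, h]
      have hhead : (X m)[0]'(hlen m) = α := by
        have := decomp_val hX m 0 (hlen m)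
        rw [hsr] at this
        simp only [Nat.add_zero] at this
        rw [← this, hx0]
      rcases (hX m).2.1 with hcm | hone
      · exfalso
        rcases hcm with ⟨k, hk, hw⟩ | ⟨k, hw⟩
        · -- tgWord: second letter γ
          have hsec : (X m)[1]'(by rw [hw, tg_len]; omega) = γ := by
            have := tg_get (τ := τ) (γ := γ) k 1 (by omega)
            simp only [hw]
            rw [this]
            simp
          have hval := decomp_val hX m 1 (by rw [hw, tg_len]; omega)
          rw [hsr, hsec] at hval
          rw [hval] at hx1
          exact h5 hx1.symm
        · -- kakWord: head κ
          have : (X m)[0]'(hlen m) = κ := by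
            have := kak_get (κ := κ) (α := α) (γ := γ) k 0 (by omega)
            simp only [hw]
            rw [this]
            simp
          rw [this] at hhead
          exact h3 hhead
      · obtain ⟨c, hc⟩ := List.length_eq_one_iff.mp hone
        simp only [hc, List.getElem_cons_zero] at hhead
        rw [hc, hhead]
  intro r hr1 hr2
  have hA := (main r).2 hr1 hr2
  have hS := (main r).1 (by omega)
  have := concat_val hu (J + r) 0 (by rw [g0_len]; rw [hA]; simp)
  rw [Sx_g0, hS] at this
  simp only [Nat.add_zero] at this
  rw [this]
  simp only [hA, g0_single, List.getElem_cons_zero]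

theorem key {N : ℕ} {τ κ α γ : Fin N}
    (h1 : τ ≠ κ) (h3 : κ ≠ α) (h5 : α ≠ γ)
    {x y : ℕ → Fin N} {X Y : ℕ → List (Fin N)} {u v : ℕ → Fin N}
    (hX : IsDecompOf (CM τ κ α γ) x X) (hY : IsDecompOf (CM τ κ α γ) y Y)
    (hu : ConcatEq (fun j => g0 τ κ α γ (X j)) u)
    (hv : ConcatEq (fun j => g0 τ κ α γ (Y j)) v)
    (J s L : ℕ) (hsx : Sx X J = s) (hsy : Sx Y J = s)
    (hL : 3 ≤ L) (hag : ∀ i, i < L → x (s + i) = y (s + i))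
    (hne : X J ≠ Y J) (hlw : (X J).length ≤ (Y J).length) :
    ∀ t, t < L - 2 → u (s + t) = v (s + t) := by
  have xval : ∀ i, ∀ _ : i < (X J).length, x (s + i) = (X J)[i] := by
    intro i h
    have := decomp_val hX J i h
    rwa [hsx] at this
  have yval : ∀ i, ∀ _ : i < (Y J).length, y (s + i) = (Y J)[i] := by
    intro i h
    have := decomp_val hY J i h
    rwa [hsy] at this
  have uval : ∀ i, ∀ h : i < (X J).length,
      u (s + i) = (g0 τ κ α γ (X J))[i]'(by rw [g0_len]; exact h) := by
    intro i h
    have := concat_val hu J i (by rw [g0_len]; exact h)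
    rwa [Sx_g0, hsx] at this
  have vval : ∀ i, ∀ h : i < (Y J).length,
      v (s + i) = (g0 τ κ α γ (Y J))[i]'(by rw [g0_len]; exact h) := by
    intro i h
    have := concat_val hv J i (by rw [g0_len]; exact h)
    rwa [Sx_g0, hsy] at this
  -- Step 1: L < |Y J|
  have hYL : L < (Y J).length := by
    by_contra hc
    push_neg at hc
    have hpre : PrefOf (Y J) (fun i => x (Sx X J + i)) := by
      intro i hi
      show (Y J).get ⟨i, hi⟩ = x (Sx X J + i)
      rw [List.get_eq_getElem, hsx, hag i (by omega)]
      exact (yval i hi).symm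
    have hle := (hX J).2.2 (Y J) (hY J).2.1 hpre
    apply hne
    apply List.ext_get (le_antisymm hlw hle)
    intro i hi1 hi2
    rw [List.get_eq_getElem, List.get_eq_getElem, ← xval i hi1, ← yval i hi2,
      hag i (by omega)]
  have hYCM : Y J ∈ CM τ κ α γ := by
    rcases (hY J).2.1 with h | h
    · exact h
    · omega
  rcases hYCM with ⟨K, hK2, hYw⟩ | ⟨K, hYw⟩
  · -- Case B = tgWord K
    have hKL : L ≤ K := by rw [hYw, tg_len] at hYL; omega
    have yget : ∀ i, i < K + 1 → y (s + i) = if i = 0 then τ else γ := by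
      intro i hi
      rw [yval i (by rw [hYw, tg_len]; omega)]
      simp only [hYw]
      exact tg_get K i hi
    have hxτ : x (s + 0) = τ := by
      rw [hag 0 (by omega), yget 0 (by omega)]
      simp
    have hxγ : ∀ i, 1 ≤ i → i < L → x (s + i) = γ := by
      intro i hi1 hi2
      rw [hag i hi2, yget i (by omega), if_neg (by omega : ¬ i = 0)]
    have hWpre : PrefOf (tgWord τ γ (L - 1)) (fun i => x (Sx X J + i)) := by
      intro i hi
      rw [tg_len] at hi
      show (tgWord τ γ (L - 1)).get ⟨i, _⟩ = x (Sx X J + i)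
      rw [List.get_eq_getElem, tg_get (L - 1) i (by omega), hsx]
      by_cases h0 : i = 0
      · subst h0
        rw [if_pos rfl]
        exact hxτ.symm
      · rw [if_neg h0]
        exact (hxγ i (by omega) (by omega)).symm
    have hWlen := (hX J).2.2 _ (Or.inl (Or.inl ⟨L - 1, by omega, rfl⟩)) hWpre
    rw [tg_len] at hWlen
    have hXL : L ≤ (X J).length := by omega
    have hXCM : X J ∈ CM τ κ α γ := by
      rcases (hX J).2.1 with h | h
      · exact h
      · omega
    rcases hXCM with ⟨k0, hk02, hXw⟩ | ⟨k0, hXw⟩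
    · -- X J = tgWord k0
      have hk0L : L ≤ k0 + 1 := by rw [hXw, tg_len] at hXL; omega
      intro t ht
      rw [uval t (by rw [hXw, tg_len]; omega), vval t (by rw [hYw, tg_len]; omega)]
      have e1 : (g0 τ κ α γ (X J))[t]'(by rw [g0_len, hXw, tg_len]; omega) =
          if t = 0 then κ else α := by
        simp only [hXw, g0_tg k0 hk02]
        rw [kak_get (k0 - 2) t (by omega)]
        by_cases h0 : t = 0
        · simp [h0]
        · rw [if_neg h0, if_pos (by omega : t ≤ k0 - 2), if_neg h0]
      have e2 : (g0 τ κ α γ (Y J))[t]'(by rw [g0_len, hYw, tg_len]; omega) =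
          if t = 0 then κ else α := by
        simp only [hYw, g0_tg K hK2]
        rw [kak_get (K - 2) t (by omega)]
        by_cases h0 : t = 0
        · simp [h0]
        · rw [if_neg h0, if_pos (by omega : t ≤ K - 2), if_neg h0]
      rw [e1, e2]
    · -- X J = kakWord k0: impossible
      exfalso
      have : x (s + 0) = κ := by
        rw [xval 0 (by rw [hXw, kak_len]; omega)]
        simp only [hXw]
        rw [kak_get k0 0 (by omega)]
        simp
      rw [hxτ] at this
      exact h1 this
  · -- Case B = kakWord K
    have hKL : K + 3 > L := by rw [hYw, kak_len] at hYL; omega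
    have hK1 : 1 ≤ K := by omega
    have yget : ∀ i, i < K + 3 →
        y (s + i) = if i = 0 then κ else if i ≤ K then α
          else if i = K + 1 then κ else γ := by
      intro i hi
      rw [yval i (by rw [hYw, kak_len]; omega)]
      simp only [hYw]
      exact kak_get K i hi
    have hxκ : x (s + 0) = κ := by
      rw [hag 0 (by omega), yget 0 (by omega)]
      simp
    have hxα : ∀ i, 1 ≤ i → i < L - 1 → x (s + i) = α := by
      intro i hi1 hi2
      rw [hag i (by omega), yget i (by omega), if_neg (by omega : ¬ i = 0),
        if_pos (by omega : i ≤ K)]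
    have e2 : ∀ t, t < L - 2 →
        v (s + t) = if t = 0 then κ else α := by
      intro t ht
      rw [vval t (by rw [hYw, kak_len]; omega)]
      simp only [hYw, g0_kak_pos h1 K hK1]
      rw [List.getElem_append_left (by rw [kak_len]; omega :
        t < (kakWord κ α γ (K - 1)).length)]
      rw [kak_get (K - 1) t (by omega)]
      by_cases h0 : t = 0
      · simp [h0]
      · rw [if_neg h0, if_pos (by omega : t ≤ K - 1), if_neg h0]
    rcases (hX J).2.1 with hXCM | hXone
    · rcases hXCM with ⟨k0, hk02, hXw⟩ | ⟨k0, hXw⟩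
      · -- tgWord: head τ vs κ
        exfalso
        have : x (s + 0) = τ := by
          rw [xval 0 (by rw [hXw, tg_len]; omega)]
          simp only [hXw]
          rw [tg_get k0 0 (by omega)]
          simp
        rw [hxκ] at this
        exact h1 this.symm
      · -- X J = kakWord k0
        have hk0K : k0 ≤ K := by rw [hXw, hYw, kak_len, kak_len] at hlw; omega
        have hk0ne : k0 ≠ K := fun h => hne (by rw [hXw, hYw, h])
        have hk0L : L ≤ k0 + 1 := by
          by_contra hc
          push_neg at hc
          have ea : x (s + (k0 + 1)) = κ := by
            rw [xval (k0 + 1) (by rw [hXw, kak_len]; omega)]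
            simp only [hXw]
            rw [kak_get k0 (k0 + 1) (by omega), if_neg (by omega : ¬ k0 + 1 = 0),
              if_neg (by omega : ¬ k0 + 1 ≤ k0), if_pos rfl]
          have eb : x (s + (k0 + 1)) = α := by
            rw [hag _ (by omega), yget (k0 + 1) (by omega),
              if_neg (by omega : ¬ k0 + 1 = 0), if_pos (by omega : k0 + 1 ≤ K)]
          rw [ea] at eb
          exact h3 eb
        intro t ht
        rw [e2 t ht, uval t (by rw [hXw, kak_len]; omega)]
        simp only [hXw, g0_kak_pos h1 k0 (by omega : 1 ≤ k0)]
        rw [List.getElem_append_left (by rw [kak_len]; omega :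
          t < (kakWord κ α γ (k0 - 1)).length)]
        rw [kak_get (k0 - 1) t (by omega)]
        by_cases h0 : t = 0
        · simp [h0]
        · rw [if_neg h0, if_pos (by omega : t ≤ k0 - 1), if_neg h0]
    · -- X J is a single letter
      obtain ⟨c, hc⟩ := List.length_eq_one_iff.mp hXone
      have hcκ : c = κ := by
        have := xval 0 (by rw [hc]; simp)
        simp only [hc, List.getElem_cons_zero] at this
        rw [← this, hxκ]
      intro t ht
      rw [e2 t ht]
      rcases Nat.eq_zero_or_pos t with rfl | htpos
      · rw [uval 0 (by rw [hc]; simp)]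
        simp only [hc, hcκ, g0_single, List.getElem_cons_zero]
        simp
      · have := run h3 h5 hX hu J s (L - 1) hsx hXone hxα t htpos (by omega)
        rw [this, if_neg (by omega : ¬ t = 0)]

theorem eqRegion {N : ℕ} {τ κ α γ : Fin N}
    {x y : ℕ → Fin N} {X Y : ℕ → List (Fin N)} {u v : ℕ → Fin N}
    (hX : IsDecompOf (CM τ κ α γ) x X) (hY : IsDecompOf (CM τ κ α γ) y Y)
    (hu : ConcatEq (fun j => g0 τ κ α γ (X j)) u)
    (hv : ConcatEq (fun j => g0 τ κ α γ (Y j)) v)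
    (J : ℕ) (heq : ∀ t, t < J → X t = Y t) :
    ∀ i, i < Sx X J → u i = v i := by
  have hlen := decomp_len_pos hX
  have hSxy : ∀ j, j ≤ J → Sx X j = Sx Y j := by
    intro j hj
    exact Finset.sum_congr rfl fun t ht => by
      rw [heq t (lt_of_lt_of_le (Finset.mem_range.1 ht) hj)]
  intro i hi
  obtain ⟨j, hj1, hj2⟩ := locate hlen i
  rw [Sx_succ] at hj2
  have hjJ : j < J := by
    by_contra hc
    push_neg at hc
    have := Sx_mono (X := X) hc
    omega
  have hd : i - Sx X j < (X j).length := by omega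
  have hu' := concat_val hu j (i - Sx X j) (by rw [g0_len]; exact hd)
  have hv' := concat_val hv j (i - Sx X j)
    (by rw [g0_len, ← heq j hjJ]; exact hd)
  rw [Sx_g0] at hu' hv'
  rw [← hSxy j (by omega)] at hv'
  have e : Sx X j + (i - Sx X j) = i := by omega
  rw [e] at hu' hv'
  simp only [heq j hjJ] at hu'
  rw [hu', hv']


/-- `|g(x) ∧ g(y)| ≥ |x ∧ y| − 2`: the first `k` letters of
`g(x)` are determined by the first `k + 2` letters of `x`. -/
theorem stmt16 {N : ℕ} (hN : 4 ≤ N) (τ κ α γ : Fin N)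
    (h1 : τ ≠ κ) (h2 : τ ≠ γ) (h3 : κ ≠ α) (h4 : κ ≠ γ) (h5 : α ≠ γ)
    (x y : ℕ → Fin N) (hx : InOmega κ x) (hy : InOmega κ y)
    (X Y : ℕ → List (Fin N))
    (hX : IsDecompOf (CM τ κ α γ) x X) (hY : IsDecompOf (CM τ κ α γ) y Y)
    (u v : ℕ → Fin N)
    (hu : ConcatEq (fun j => g0 τ κ α γ (X j)) u)
    (hv : ConcatEq (fun j => g0 τ κ α γ (Y j)) v) :
    ∀ k : ℕ, (∀ i < k + 2, x i = y i) → ∀ i < k, u i = v i := by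
  classical
  intro k hag i hik
  have hlenX := decomp_len_pos hX
  by_cases hall : ∀ j, X j = Y j
  · apply eqRegion hX hY hu hv (i + 1) (fun t _ => hall t) i
    have := le_Sx hlenX (i + 1)
    omega
  · push_neg at hall
    have hExists : ∃ j, X j ≠ Y j := hall
    set J := Nat.find hExists with hJ
    have heq : ∀ t, t < J → X t = Y t := fun t ht => by
      have := Nat.find_min hExists ht
      simpa using this
    have hne : X J ≠ Y J := Nat.find_spec hExists
    set s := Sx X J with hs
    have hsy : Sx Y J = s := by
      rw [hs]
      exact (Finset.sum_congr rfl fun t ht => by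
        rw [heq t (Finset.mem_range.1 ht)]).symm
    rcases Nat.lt_or_ge i s with his | his
    · exact eqRegion hX hY hu hv J heq i his
    · have hsk : s < k := by omega
      set L := k + 2 - s with hLdef
      have hL3 : 3 ≤ L := by omega
      have hag' : ∀ d, d < L → x (s + d) = y (s + d) := fun d hd =>
        hag (s + d) (by omega)
      have ht : i - s < L - 2 := by omega
      have e : s + (i - s) = i := by omega
      rcases le_total (X J).length (Y J).length with hlw | hlw
      · have := key h1 h3 h5 hX hY hu hv J s L hs.symm hsy hL3 hag' hne hlw
        rw [← e]
        exact this (i - s) ht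
      · have hag'' : ∀ d, d < L → y (s + d) = x (s + d) := fun d hd =>
          (hag' d hd).symm
        have := key h1 h3 h5 hY hX hv hu J s L hsy hs.symm hL3 hag''
          (Ne.symm hne) hlw
        rw [← e]
        exact (this (i - s) ht).symm
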